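/- arXiv:1602.00098 — 2 statements merged into one kernel-verified Lean document; each statement's English description precedes it below -/
import Mathlib

section
/- For every d ≥ 1 and every ε with 0 < ε < π, there exist a continuous function h : T^d → R and a constant β > 0 such that: (1) the Fourier coefficients ĥ(m) = ∫_{T^d} h(t) e^{-i⟨m,t⟩} dλ(t) satisfy ĥ(m) ≥ 0 for all m ∈ Z^d and ĥ(0) = 0; (2) sup_{t∈T^d} h(t) = h(0) = 1; (3) h(t) ≤ -β for every t ∈ T^d with max_{1≤j≤d} |t_j| ≥ ε. -/
open MeasureTheory ProbabilityTheory Matrix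

noncomputable section

/-- Normalized Lebesgue measure `λ` on `T^d = [-π,π]^d`, with `λ(T^d) = 1`. -/
def normLeb (d : ℕ) : Measure (Fin d → ℝ) :=
  (ENNReal.ofReal ((2 * Real.pi) ^ d))⁻¹ •
    (volume.restrict {t : Fin d → ℝ | ∀ j, |t j| ≤ Real.pi})

/-- Fourier coefficient `μ̂(m) = ∫_{T^d} e^{i⟨m,t⟩} dμ(t)` for `m ∈ ℤ^d`. -/
def muHat {d : ℕ} (μ : Measure (Fin d → ℝ)) (m : Fin d → ℤ) : ℂ :=
  ∫ t, Complex.exp (Complex.I * (∑ j, (m j : ℂ) * (t j : ℂ))) ∂μ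

/-- The matrix `Σ_A = (μ̂(j-k))_{j,k ∈ A}` (real, since `μ` is symmetric). -/
def SigmaA {d : ℕ} (μ : Measure (Fin d → ℝ)) (A : Finset (Fin d → ℤ)) :
    Matrix A A ℝ :=
  fun j k => (muHat μ (j.1 - k.1)).re

/-- `X` is a centered Gaussian vector with covariance matrix `S` (under `P`):
every linear combination of the coordinates is a centered one-dimensional
Gaussian with the corresponding variance. -/
def IsCenteredGaussianVec {ι : Type*} [Fintype ι] {Ω : Type*} [MeasurableSpace Ω]
    (P : Measure Ω) (X : ι → Ω → ℝ) (S : Matrix ι ι ℝ) : Prop :=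
  ∀ u : ι → ℝ,
    P.map (fun ω => ∑ i, u i * X i ω) =
      gaussianReal 0 (Real.toNNReal (u ⬝ᵥ S.mulVec u))

/-- Fourier coefficient `ĥ(m) = ∫_{T^d} h(t) e^{-i⟨m,t⟩} dλ(t)`. -/
def fCoeff (d : ℕ) (h : (Fin d → ℝ) → ℝ) (m : Fin d → ℤ) : ℂ :=
  ∫ t, (h t : ℂ) * Complex.exp (-Complex.I * ∑ j, (m j : ℂ) * (t j : ℂ)) ∂(normLeb d)

/-! ### Auxiliary lemmas -/

section Aux

open Set Real Complex Finset Filter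

/-- Fubini for a product of one-variable functions over a power of a measure on `ℝ`. -/
theorem integral_pi_prod {n : ℕ} (μ : Measure ℝ) [SigmaFinite μ] (f : Fin n → ℝ → ℂ) :
    ∫ x : Fin n → ℝ, ∏ i, f i (x i) ∂(Measure.pi fun _ => μ) = ∏ i, ∫ x, f i x ∂μ := by
  induction n with
  | zero => simp [measureReal_def, Measure.pi_univ]
  | succ n n_ih =>
      calc
        _ = ∫ x : ℝ × (Fin n → ℝ),
            f 0 x.1 * ∏ i : Fin n, f (Fin.succ i) (x.2 i) ∂(μ.prod (Measure.pi fun _ => μ)) := by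
          rw [← ((measurePreserving_piFinSuccAbove
            (fun _ : Fin (n+1) => μ) 0).symm).integral_comp']
          congr 1
          ext x
          show (∏ i, f i _) = _
          rw [Fin.prod_univ_succ]
          simp [MeasurableEquiv.piFinSuccAbove_symm_apply, Fin.insertNthEquiv,
            Fin.insertNth_zero, Fin.zero_succAbove]
        _ = (∫ x, f 0 x ∂μ) * ∏ i : Fin n, ∫ x, f (Fin.succ i) x ∂μ := by
          rw [← n_ih, ← integral_prod_mul]
        _ = ∏ i, ∫ x, f i x ∂μ := by rw [Fin.prod_univ_succ]

theorem box_eq (d : ℕ) :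
    {t : Fin d → ℝ | ∀ j, |t j| ≤ π} = Set.pi univ fun _ => Icc (-π) π := by
  ext t
  simp only [Set.mem_setOf_eq, Set.mem_pi, Set.mem_univ, forall_true_left, Set.mem_Icc,
    abs_le, forall_const]

theorem isCompact_box (d : ℕ) : IsCompact {t : Fin d → ℝ | ∀ j, |t j| ≤ π} := by
  rw [box_eq]
  exact isCompact_univ_pi fun _ => isCompact_Icc

theorem normLeb_eq (d : ℕ) :
    normLeb d = (ENNReal.ofReal ((2 * π) ^ d))⁻¹ •
      Measure.pi (fun _ : Fin d => volume.restrict (Icc (-π) π)) := by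
  rw [normLeb, box_eq]
  congr 1
  rw [volume_pi]
  refine (Measure.pi_eq fun s hs => ?_).symm
  rw [Measure.restrict_apply (MeasurableSet.univ_pi hs), ← Set.pi_inter_distrib, Measure.pi_pi]
  simp [Measure.restrict_apply (hs _)]

theorem integral_normLeb_prod (d : ℕ) (f : Fin d → ℝ → ℂ) :
    ∫ t, ∏ j, f j (t j) ∂(normLeb d)
      = ∏ j, (((2 * π : ℝ)⁻¹ : ℂ) * ∫ x in Icc (-π) π, f j x) := by
  rw [normLeb_eq, integral_smul_measure, integral_pi_prod]
  rw [Finset.prod_mul_distrib, Finset.prod_const, card_univ, Fintype.card_fin]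
  have h2 : ((ENNReal.ofReal ((2 * π) ^ d))⁻¹).toReal = ((2*π:ℝ)⁻¹)^d := by
    rw [ENNReal.toReal_inv, ENNReal.toReal_ofReal (by positivity), ← inv_pow]
  rw [h2, Complex.real_smul]
  push_cast
  ring

theorem integrable_normLeb {d : ℕ} (f : (Fin d → ℝ) → ℂ) (hf : Continuous f) :
    Integrable f (normLeb d) := by
  rw [normLeb]
  refine Integrable.smul_measure ?_ (ENNReal.inv_ne_top.mpr ?_)
  · exact hf.continuousOn.integrableOn_compact (isCompact_box d)
  · exact (ENNReal.ofReal_pos.mpr (by positivity)).ne'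

/-- Orthogonality of characters on `[-π, π]`. -/
theorem orth (k : ℤ) :
    ∫ x in Icc (-π) π, Complex.exp (-Complex.I * k * x) =
      if k = 0 then ((2*π : ℝ) : ℂ) else 0 := by
  rw [MeasureTheory.integral_Icc_eq_integral_Ioc,
    ← intervalIntegral.integral_of_le (by linarith [Real.pi_pos] : -π ≤ π)]
  rcases eq_or_ne k 0 with hk | hk
  · simp [hk]; ring
  · rw [if_neg hk]
    have hc : (-Complex.I * k) ≠ 0 := by simp [Complex.I_ne_zero, hk]
    have := integral_exp_mul_complex (a := -π) (b := π) hc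
    simp_rw [mul_assoc] at this ⊢
    rw [this]
    have h1 : Complex.exp (-Complex.I * (k * π)) = Complex.exp (-Complex.I * (k * (-π : ℝ))) := by
      rw [Complex.exp_eq_exp_iff_exists_int]
      exact ⟨-k, by push_cast; ring⟩
    rw [h1]; simp

/-- The `m`-th Fourier coefficient of `cos(x/2)^(2n)` on `[-π,π]`, unnormalized. -/
def Rcoef (n : ℕ) (m : ℤ) : ℝ :=
  ∑ k ∈ Finset.range (2*n+1), (2:ℝ)⁻¹ ^ (2*n) * ((2*n).choose k) *
    (if m + n - k = 0 then 2*π else 0)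

theorem Rcoef_nonneg (n : ℕ) (m : ℤ) : 0 ≤ Rcoef n m := by
  refine Finset.sum_nonneg fun k _ => ?_
  have h0 : (0:ℝ) ≤ if (m:ℤ) + n - k = 0 then 2*π else 0 := by
    split_ifs
    · positivity
    · exact le_refl 0
  exact mul_nonneg (by positivity) h0

theorem Rcoef_zero (n : ℕ) : Rcoef n 0 = 2*π * (((2*n).choose n : ℝ) / 4^n) := by
  rw [Rcoef]
  rw [Finset.sum_eq_single n]
  · rw [if_pos (by omega)]
    rw [show (2:ℝ)⁻¹ ^ (2*n) = ((4:ℝ)^n)⁻¹ by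
      rw [pow_mul, ← inv_pow]; norm_num]
    field_simp
  · intro k _ hk
    rw [if_neg (by omega), mul_zero]
  · intro hn
    exact absurd hn (by simp; omega)

theorem coeff_g (n : ℕ) (m : ℤ) :
    ∫ x in Icc (-π) π, ((Real.cos (x/2) ^ (2*n) : ℝ) : ℂ) * Complex.exp (-Complex.I * m * x)
      = ((Rcoef n m : ℝ) : ℂ) := by
  have key : ∀ x : ℝ, ((Real.cos (x/2) ^ (2*n) : ℝ) : ℂ) * Complex.exp (-Complex.I * m * x)
      = ∑ k ∈ range (2*n+1), ((2:ℂ)⁻¹ ^ (2*n) * ((2*n).choose k)) *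
          Complex.exp (-Complex.I * (((m:ℤ) + n - k : ℤ)) * x) := by
    intro x
    have hc : ((Real.cos (x/2) : ℝ) : ℂ) = Complex.cos (x/2 : ℝ) := by
      rw [Complex.ofReal_cos]
    push_cast [hc]
    rw [Complex.cos, div_pow, add_pow, Finset.sum_div, Finset.sum_mul]
    refine Finset.sum_congr rfl fun k hk => ?_
    have hk' : k ≤ 2*n := by simpa using Nat.lt_succ_iff.mp (Finset.mem_range.mp hk)
    rw [← Complex.exp_nat_mul, ← Complex.exp_nat_mul]
    have e1 : Complex.exp ((k:ℂ) * ((x:ℂ)/2 * Complex.I)) *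
        Complex.exp (((2*n - k : ℕ):ℂ) * (-((x:ℂ)/2) * Complex.I)) *
        Complex.exp (-Complex.I * (m:ℂ) * (x:ℂ))
        = Complex.exp (-Complex.I * ((m:ℂ) + (n:ℂ) - (k:ℂ)) * (x:ℂ)) := by
      rw [← Complex.exp_add, ← Complex.exp_add]
      congr 1
      push_cast [hk']
      ring
    calc Complex.exp ((k:ℂ) * ((x:ℂ)/2 * Complex.I)) *
          Complex.exp (((2*n - k : ℕ):ℂ) * (-((x:ℂ)/2) * Complex.I)) * ((2*n).choose k : ℂ) /
          (2:ℂ)^(2*n) * Complex.exp (-Complex.I * (m:ℂ) * (x:ℂ))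
        = ((2:ℂ)⁻¹ ^ (2*n) * ((2*n).choose k)) *
          (Complex.exp ((k:ℂ) * ((x:ℂ)/2 * Complex.I)) *
           Complex.exp (((2*n - k : ℕ):ℂ) * (-((x:ℂ)/2) * Complex.I)) *
           Complex.exp (-Complex.I * (m:ℂ) * (x:ℂ))) := by
          rw [inv_pow]; ring
      _ = _ := by rw [e1]
  simp_rw [key]
  rw [MeasureTheory.integral_finset_sum]
  · rw [Rcoef]
    push_cast
    refine Finset.sum_congr rfl fun k hk => ?_
    have ho := orth ((m:ℤ) + n - k)
    push_cast at ho
    rw [integral_const_mul, ho]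
    split_ifs <;> push_cast <;> ring
  · intro k hk
    apply Continuous.integrableOn_Icc
    fun_prop

end Aux

/-- For every `d ≥ 1` and `0 < ε < π` there exist a continuous
function `h : T^d → ℝ` and `β > 0` such that: all Fourier coefficients `ĥ(m)` are
real and nonnegative with `ĥ(0) = 0`; `sup h = h(0) = 1`; and `h(t) ≤ -β` whenever
`max_j |t_j| ≥ ε`. -/
theorem exists_auxiliary_function_h
    (d : ℕ) (hd : 1 ≤ d) (ε : ℝ) (hε : 0 < ε) (hεπ : ε < Real.pi) :
    ∃ (h : (Fin d → ℝ) → ℝ) (β : ℝ), 0 < β ∧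
      ContinuousOn h {t : Fin d → ℝ | ∀ j, |t j| ≤ Real.pi} ∧
      (∀ m : Fin d → ℤ, (fCoeff d h m).im = 0 ∧ 0 ≤ (fCoeff d h m).re) ∧
      fCoeff d h 0 = 0 ∧
      h 0 = 1 ∧
      (∀ t : Fin d → ℝ, (∀ j, |t j| ≤ Real.pi) → h t ≤ 1) ∧
      (∀ t : Fin d → ℝ, (∀ j, |t j| ≤ Real.pi) → (∃ j, ε ≤ |t j|) → h t ≤ -β) := by
  classical
  have hpi := Real.pi_pos
  set c := Real.cos (ε/2) with hc_def
  have hcpos : 0 < c := Real.cos_pos_of_mem_Ioo ⟨by linarith, by linarith⟩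
  have hclt : c < 1 := by
    have h0 : Real.cos (ε/2) < Real.cos 0 :=
      Real.cos_lt_cos_of_nonneg_of_le_pi le_rfl (by linarith) (by positivity)
    rw [Real.cos_zero] at h0
    simpa [hc_def] using h0
  set q := c ^ 2 with hq_def
  have hq0 : 0 < q := by positivity
  have hq1 : q < 1 := by
    calc q ≤ c := by nlinarith
    _ < 1 := hclt
  -- choose n
  obtain ⟨n, hn1, hn⟩ : ∃ n : ℕ, 1 ≤ n ∧ ((2*n+1 : ℝ))^d * q^n < 1 := by
    have h3 : Filter.Tendsto (fun n : ℕ => (n:ℝ)^d * q^n) Filter.atTop (nhds 0) :=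
      tendsto_pow_const_mul_const_pow_of_lt_one d hq0.le hq1
    have h4 := h3.eventually (gt_mem_nhds (show (0:ℝ) < (3:ℝ)⁻¹^d by positivity))
    obtain ⟨n, hn4, hn1⟩ := (h4.and (Filter.eventually_ge_atTop 1)).exists
    refine ⟨n, hn1, ?_⟩
    have hn1' : (1:ℝ) ≤ n := by exact_mod_cast hn1
    have h5 : (2*(n:ℝ)+1) ≤ 3*n := by linarith
    have h6 : ((2*n+1:ℝ))^d ≤ (3*n)^d := by
      apply pow_le_pow_left₀ (by positivity) h5
    calc ((2*n+1:ℝ))^d * q^n ≤ (3*(n:ℝ))^d * q^n := by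
          apply mul_le_mul_of_nonneg_right h6 (by positivity)
      _ = 3^d * ((n:ℝ)^d * q^n) := by rw [mul_pow]; ring
      _ < 3^d * (3:ℝ)⁻¹^d := by
          apply mul_lt_mul_of_pos_left hn4 (by positivity)
      _ = 1 := by rw [← mul_pow]; norm_num
  -- the one-variable function g
  set g : ℝ → ℝ := fun x => Real.cos (x/2) ^ (2*n) with hg_def
  have hgcont : Continuous g := by
    rw [hg_def]; fun_prop
  have hg0 : ∀ x, 0 ≤ g x := by
    intro x; simp only [hg_def]; rw [pow_mul]; positivity
  have hg1 : ∀ x, g x ≤ 1 := by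
    intro x; simp only [hg_def]; rw [pow_mul]
    exact pow_le_one₀ (sq_nonneg _) (Real.cos_sq_le_one _)
  have hgbad : ∀ x : ℝ, |x| ≤ Real.pi → ε ≤ |x| → g x ≤ q^n := by
    intro x hx1 hx2
    simp only [hg_def]
    rw [pow_mul]
    apply pow_le_pow_left₀ (sq_nonneg _)
    rw [hq_def]
    have e1 : Real.cos (x/2) ^ 2 = Real.cos (|x|/2) ^ 2 := by
      rcases abs_cases x with ⟨h, _⟩ | ⟨h, _⟩
      · rw [h]
      · rw [h, show -x/2 = -(x/2) by ring, Real.cos_neg]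
    rw [e1]
    have h2 : Real.cos (|x|/2) ≤ c := by
      rw [hc_def]
      apply Real.cos_le_cos_of_nonneg_of_le_pi (by positivity) (by linarith) (by linarith)
    have h3 : 0 ≤ Real.cos (|x|/2) := by
      apply Real.cos_nonneg_of_mem_Icc
      constructor
      · linarith [abs_nonneg x]
      · linarith
    exact pow_le_pow_left₀ h3 h2 2
  -- the constants c0 and a
  set c0 : ℝ := ((2*n).choose n : ℝ) / 4^n with hc0_def
  have hch_pos : 0 < ((2*n).choose n : ℝ) := by
    exact_mod_cast Nat.choose_pos (by omega : n ≤ 2*n)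
  have hc0pos : 0 < c0 := by positivity
  have hch_lt : ((2*n).choose n : ℝ) < 4^n := by
    have h1 : (2*n).choose n + 1 ≤ 2^(2*n) := by
      have hsum := Nat.sum_range_choose (2*n)
      have h0 : (0:ℕ) ∈ Finset.range (2*n+1) := by simp
      have heq := Finset.add_sum_erase (Finset.range (2*n+1)) (fun k => (2*n).choose k) h0
      have hmem : n ∈ (Finset.range (2*n+1)).erase 0 := by
        simp [Finset.mem_erase]; omega
      have hle : (2*n).choose n ≤ ∑ k ∈ (Finset.range (2*n+1)).erase 0, (2*n).choose k :=
        Finset.single_le_sum (fun _ _ => Nat.zero_le _) hmem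
      simp only [Nat.choose_zero_right] at heq
      omega
    have h2 : ((2:ℝ))^(2*n) = 4^n := by rw [pow_mul]; norm_num
    calc ((2*n).choose n : ℝ) < ((2*n).choose n : ℝ) + 1 := by linarith
      _ ≤ 2^(2*n) := by exact_mod_cast h1
      _ = 4^n := h2
  have hc0lt1 : c0 < 1 := by
    rw [hc0_def, div_lt_one (by positivity)]
    exact hch_lt
  have hc0low : ((2*(n:ℝ)+1))⁻¹ ≤ c0 := by
    have h1 : (4:ℝ)^n ≤ (2*n+1) * ((2*n).choose n) := by
      exact_mod_cast Nat.four_pow_le_two_mul_add_one_mul_central_binom n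
    rw [hc0_def, le_div_iff₀ (by positivity), inv_mul_eq_div, div_le_iff₀ (by positivity)]
    push_cast at h1 ⊢
    linarith
  set a : ℝ := c0 ^ d with ha_def
  have ha0 : 0 < a := by positivity
  have ha1 : a < 1 := pow_lt_one₀ hc0pos.le hc0lt1 (by omega)
  have h1a : 0 < 1 - a := by linarith
  have haq : q^n < a := by
    have h1 : q^n < ((2*(n:ℝ)+1))⁻¹^d := by
      rw [← one_div, div_pow, lt_div_iff₀ (by positivity), one_pow]
      calc q^n * (2*(n:ℝ)+1)^d = ((2*(n:ℝ)+1))^d * q^n := by ring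
        _ = ((2*n+1:ℝ))^d * q^n := by push_cast; ring
        _ < 1 := hn
    calc q^n < ((2*(n:ℝ)+1))⁻¹^d := h1
      _ ≤ c0^d := pow_le_pow_left₀ (by positivity) hc0low d
  -- the function h and the constant β
  set G : (Fin d → ℝ) → ℝ := fun t => ∏ j, g (t j) with hG_def
  have hGcont : Continuous G := by
    rw [hG_def]
    exact continuous_finset_prod _ fun j _ => hgcont.comp (continuous_apply j)
  set h : (Fin d → ℝ) → ℝ := fun t => (G t - a)/(1-a) with hh_def
  set β : ℝ := (a - q^n)/(1-a) with hβ_def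
  have hβpos : 0 < β := div_pos (by linarith) h1a
  have hprod0 : (2*Real.pi)⁻¹ * Rcoef n 0 = c0 := by
    rw [Rcoef_zero, inv_mul_cancel_left₀ (by positivity)]
  -- the Fourier coefficients of h
  have hfC : ∀ m : Fin d → ℤ, fCoeff d h m
      = (((1-a)⁻¹ * ((∏ j, (2*Real.pi)⁻¹ * Rcoef n (m j)) - a * (if m = 0 then 1 else 0)) : ℝ) : ℂ) := by
    intro m
    have hGe : (∫ t, ((G t : ℝ):ℂ) * Complex.exp (-Complex.I * ∑ j, (m j : ℂ) * (t j : ℂ)) ∂(normLeb d))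
        = ((∏ j, (2*Real.pi)⁻¹ * Rcoef n (m j) : ℝ) : ℂ) := by
      have hpt : ∀ t : Fin d → ℝ,
          ((G t : ℝ):ℂ) * Complex.exp (-Complex.I * ∑ j, (m j:ℂ) * (t j:ℂ))
          = ∏ j, (fun j (x:ℝ) => ((Real.cos (x/2) ^ (2*n) : ℝ):ℂ) *
              Complex.exp (-Complex.I * (m j : ℂ) * (x:ℂ))) j (t j) := by
        intro t
        simp only [hG_def, hg_def]
        rw [Complex.ofReal_prod, Finset.mul_sum]
        simp_rw [← mul_assoc]
        rw [Complex.exp_sum, ← Finset.prod_mul_distrib]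
      simp_rw [hpt]
      have h1 := integral_normLeb_prod d (fun j (x:ℝ) => ((Real.cos (x/2) ^ (2*n) : ℝ):ℂ) *
          Complex.exp (-Complex.I * (m j : ℂ) * (x:ℂ)))
      beta_reduce at h1
      rw [h1]
      simp_rw [coeff_g]
      push_cast
      rfl
    have he : (∫ t, Complex.exp (-Complex.I * ∑ j, (m j : ℂ) * (t j : ℂ)) ∂(normLeb d))
        = if m = 0 then 1 else 0 := by
      have hpt : ∀ t : Fin d → ℝ,
          Complex.exp (-Complex.I * ∑ j, (m j:ℂ) * (t j:ℂ))
          = ∏ j, (fun j (x:ℝ) => Complex.exp (-Complex.I * (m j : ℂ) * (x:ℂ))) j (t j) := by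
        intro t
        rw [Finset.mul_sum]
        simp_rw [← mul_assoc]
        rw [Complex.exp_sum]
      simp_rw [hpt]
      have h1 := integral_normLeb_prod d (fun j (x:ℝ) =>
          Complex.exp (-Complex.I * (m j : ℂ) * (x:ℂ)))
      beta_reduce at h1
      rw [h1]
      have hfac : ∀ j : Fin d, (((2 * Real.pi : ℝ)⁻¹ : ℂ) *
          ∫ x in Set.Icc (-Real.pi) Real.pi, Complex.exp (-Complex.I * (m j : ℂ) * (x:ℂ)))
          = if m j = 0 then 1 else 0 := by
        intro j
        rw [orth (m j)]
        split_ifs with hj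
        · have h2 : ((2*Real.pi:ℝ):ℂ) ≠ 0 := Complex.ofReal_ne_zero.mpr (by positivity)
          push_cast
          field_simp
        · rw [mul_zero]
      simp_rw [hfac]
      rw [Finset.prod_boole]
      congr 1
      simp [funext_iff]
    have hE : Continuous fun t : Fin d → ℝ =>
        Complex.exp (-Complex.I * ∑ j, (m j : ℂ) * (t j : ℂ)) := by
      apply Complex.continuous_exp.comp
      apply continuous_const.mul
      exact continuous_finset_sum _ fun j _ =>
        continuous_const.mul (Complex.continuous_ofReal.comp (continuous_apply j))
    have hne : ((1-a:ℝ):ℂ) ≠ 0 := Complex.ofReal_ne_zero.mpr h1a.ne'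
    have hpt2 : ∀ t : Fin d → ℝ,
        ((h t : ℝ):ℂ) * Complex.exp (-Complex.I * ∑ j, (m j:ℂ) * (t j:ℂ))
        = ((1-a:ℝ):ℂ)⁻¹ * (((G t : ℝ):ℂ) * Complex.exp (-Complex.I * ∑ j, (m j:ℂ) * (t j:ℂ))
            - ((a:ℝ):ℂ) * Complex.exp (-Complex.I * ∑ j, (m j:ℂ) * (t j:ℂ))) := by
      intro t
      simp only [hh_def]
      push_cast
      field_simp
    rw [fCoeff]
    simp_rw [hpt2]
    rw [integral_const_mul, MeasureTheory.integral_sub, integral_const_mul, hGe, he]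
    · push_cast [apply_ite (fun x : ℝ => (x : ℂ))]
      ring
    · exact integrable_normLeb _ (((Complex.continuous_ofReal.comp hGcont)).mul hE)
    · exact integrable_normLeb _ (continuous_const.mul hE)
  have hPa : (∏ _j : Fin d, (2*Real.pi)⁻¹ * Rcoef n 0) = a := by
    rw [Finset.prod_const, hprod0, Finset.card_univ, Fintype.card_fin, ha_def]
  refine ⟨h, β, hβpos, ?_, ?_, ?_, ?_, ?_, ?_⟩
  · exact ((hGcont.sub continuous_const).div_const _).continuousOn
  · intro m
    rw [hfC m]
    refine ⟨Complex.ofReal_im _, ?_⟩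
    rw [Complex.ofReal_re]
    by_cases hm : m = 0
    · subst hm
      simp only [if_pos rfl, mul_one]
      simp only [Pi.zero_apply, hPa]
      simp
    · rw [if_neg hm, mul_zero, sub_zero]
      apply mul_nonneg (by positivity)
      exact Finset.prod_nonneg fun j _ =>
        mul_nonneg (by positivity) (Rcoef_nonneg n (m j))
  · rw [hfC 0]
    simp only [Pi.zero_apply, hPa, if_pos rfl, mul_one, sub_self, mul_zero]
    norm_num
  · simp only [hh_def, hG_def, hg_def, Pi.zero_apply]
    norm_num
    exact h1a.ne'
  · intro t _
    rw [hh_def, div_le_one h1a]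
    have : G t ≤ 1 := by
      rw [hG_def]
      exact Finset.prod_le_one (fun j _ => hg0 _) (fun j _ => hg1 _)
    linarith
  · rintro t ht ⟨j, hj⟩
    have hGle : G t ≤ g (t j) := by
      show (∏ k : Fin d, g (t k)) ≤ g (t j)
      rw [← Finset.mul_prod_erase Finset.univ _ (Finset.mem_univ j)]
      have h2 : ∏ k ∈ Finset.univ.erase j, g (t k) ≤ 1 :=
        Finset.prod_le_one (fun _ _ => hg0 _) (fun _ _ => hg1 _)
      have h3 : 0 ≤ ∏ k ∈ Finset.univ.erase j, g (t k) :=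
        Finset.prod_nonneg fun _ _ => hg0 _
      nlinarith [hg0 (t j)]
    have hq : G t ≤ q^n := le_trans hGle (hgbad (t j) (ht j) hj)
    rw [hh_def, hβ_def, div_le_iff₀ h1a]
    have : -((a - q ^ n) / (1 - a)) * (1 - a) = q^n - a := by
      field_simp
      ring
    rw [this]
    linarith


end
end

section
/- Let r ≥ 0 and a_0, a_1, …, a_r ∈ R with Σ_{k=0}^r a_k ≠ 0, let (ξ_k)_{k∈Z} be i.i.d. standard Gaussian random variables, and define the moving-average process X_n = Σ_{k=0}^r a_k ξ_{n+k} for n ∈ Z. Then there exists a finite constant c (depending on a_0,…,a_r) such that for all N ≥ 1, P(X_1 > 0, X_2 > 0, …, X_N > 0) ≥ e^{-cN}. -/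
open MeasureTheory ProbabilityTheory
open scoped ENNReal

noncomputable section

/-- The standard Gaussian measure of a nonempty open interval is positive. -/
lemma gaussianReal_Ioo_pos (t u : ℝ) (htu : t < u) :
    0 < gaussianReal 0 1 (Set.Ioo t u) := by
  rw [gaussianReal_apply 0 one_ne_zero]
  have hmeas : Measurable (gaussianPDF 0 1) :=
    (measurable_gaussianPDFReal 0 1).ennreal_ofReal
  rw [setLIntegral_pos_iff hmeas]
  have hsupp : Function.support (gaussianPDF 0 1) = Set.univ := by
    ext x
    simp only [Function.mem_support, Set.mem_univ, iff_true, gaussianPDF]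
    exact ne_of_gt (ENNReal.ofReal_pos.mpr (gaussianPDFReal_pos 0 1 x one_ne_zero))
  rw [hsupp, Set.univ_inter]
  exact (MeasureTheory.Measure.measure_Ioo_pos (volume : Measure ℝ)).mpr htu

/-- For a finite moving-average process
`X_n = Σ_{k=0}^r a_k ξ_{n+k}` with `Σ_k a_k ≠ 0` built from i.i.d. standard
Gaussians, there is a finite constant `c` such that
`P(X_1 > 0, …, X_N > 0) ≥ e^{-cN}` for all `N ≥ 1`. -/
theorem moving_average_persistence_exponential_lower_bound
    (r : ℕ) (a : Fin (r + 1) → ℝ) (ha : (∑ k, a k) ≠ 0)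
    (Ω : Type) [MeasurableSpace Ω] (P : Measure Ω) [IsProbabilityMeasure P]
    (ξ : ℤ → Ω → ℝ)
    (hmeas : ∀ i, Measurable (ξ i))
    (hdist : ∀ i, P.map (ξ i) = gaussianReal 0 1)
    (hindep : iIndepFun ξ P)
    (X : ℤ → Ω → ℝ)
    (hX : ∀ n ω, X n ω = ∑ k : Fin (r + 1), a k * ξ (n + (k : ℕ)) ω) :
    ∃ c : ℝ, ∀ N : ℕ, 1 ≤ N →
      ENNReal.ofReal (Real.exp (-c * (N : ℝ))) ≤
        P {ω | ∀ m : ℤ, 1 ≤ m → m ≤ (N : ℤ) → 0 < X m ω} := by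
  classical
  set s : ℝ := ∑ k, a k with hs
  set A : ℝ := ∑ k, |a k| with hA
  set t : ℝ := (A + 1) / s with ht
  set I : Set ℝ := Set.Ioo t (t + 1) with hI
  have hst : s * t = A + 1 := mul_div_cancel₀ _ ha
  -- the probability of one coordinate being in I
  set q : ℝ≥0∞ := gaussianReal 0 1 I with hq
  have hq0 : 0 < q := gaussianReal_Ioo_pos t (t + 1) (by linarith)
  have hq1 : q ≤ 1 := prob_le_one
  have hqtop : q ≠ ⊤ := (lt_of_le_of_lt hq1 ENNReal.one_lt_top).ne
  set qr : ℝ := q.toReal with hqr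
  have hqr0 : 0 < qr := ENNReal.toReal_pos hq0.ne' hqtop
  have hqr1 : qr ≤ 1 := by
    rw [hqr, ← ENNReal.toReal_one]
    exact ENNReal.toReal_mono ENNReal.one_ne_top hq1
  refine ⟨(r + 1) * (-Real.log qr), fun N hN => ?_⟩
  -- the preimage event
  set S : Finset ℤ := Finset.Icc (1 : ℤ) ((N : ℤ) + r) with hS
  set E : Set Ω := ⋂ j ∈ S, (ξ j) ⁻¹' I with hE
  have hPE : P E = q ^ (N + r) := by
    have := hindep.meas_biInter (S := S) (s := fun j => (ξ j) ⁻¹' I)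
      (fun i _ => ⟨I, measurableSet_Ioo, rfl⟩)
    rw [hE, this]
    have hone : ∀ j ∈ S, P ((ξ j) ⁻¹' I) = q := by
      intro j _
      rw [hq, ← hdist j, Measure.map_apply (hmeas j) measurableSet_Ioo]
    rw [Finset.prod_congr rfl hone, Finset.prod_const]
    congr 1
    rw [hS, Int.card_Icc]
    omega
  -- E is contained in the target event
  have hsub : E ⊆ {ω | ∀ m : ℤ, 1 ≤ m → m ≤ (N : ℤ) → 0 < X m ω} := by
    intro ω hω
    intro m hm1 hmN
    have hξ : ∀ k : Fin (r + 1), ξ (m + (k : ℕ)) ω ∈ I := by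
      intro k
      have hk : (m + (k : ℕ)) ∈ S := by
        rw [hS, Finset.mem_Icc]
        have := k.isLt
        omega
      exact Set.mem_iInter₂.mp hω _ hk
    rw [hX]
    have hterm : ∀ k : Fin (r + 1), a k * t - |a k| ≤ a k * ξ (m + (k : ℕ)) ω := by
      intro k
      obtain ⟨h1, h2⟩ := hξ k
      have habs : |a k * (ξ (m + (k : ℕ)) ω - t)| ≤ |a k| := by
        rw [abs_mul]
        have : |ξ (m + (k : ℕ)) ω - t| ≤ 1 := by
          rw [abs_le]; constructor <;> [linarith; linarith]
        calc |a k| * |ξ (m + (k : ℕ)) ω - t| ≤ |a k| * 1 :=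
              mul_le_mul_of_nonneg_left this (abs_nonneg _)
          _ = |a k| := mul_one _
      have := neg_abs_le (a k * (ξ (m + (k : ℕ)) ω - t))
      nlinarith [abs_le.mp habs]
    have hsum : ∑ k : Fin (r + 1), (a k * t - |a k|) ≤
        ∑ k : Fin (r + 1), a k * ξ (m + (k : ℕ)) ω :=
      Finset.sum_le_sum (fun k _ => hterm k)
    have hval : ∑ k : Fin (r + 1), (a k * t - |a k|) = 1 := by
      rw [Finset.sum_sub_distrib, ← Finset.sum_mul, ← hs, ← hA, hst]
      ring
    linarith
  refine le_trans ?_ (le_trans hPE.symm.le (measure_mono hsub))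
  -- final numeric bound
  rw [← ENNReal.ofReal_toReal hqtop, ← hqr, ← ENNReal.ofReal_pow hqr0.le]
  apply ENNReal.ofReal_le_ofReal
  have hexp : Real.exp (-((r + 1 : ℝ) * (-Real.log qr)) * N) = qr ^ ((r + 1) * N) := by
    rw [← Real.exp_log hqr0, ← Real.exp_nat_mul]
    congr 1
    rw [Real.log_exp]
    push_cast
    ring
  rw [hexp]
  apply pow_le_pow_of_le_one hqr0.le hqr1
  calc N + r ≤ N + r * N := by nlinarith
    _ = (r + 1) * N := by ring
end
end
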